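/- Let X be a distribution on ℝ^d with mean μ and covariance Σ ⪯ σ²I. Then for any event (subset) E with probability mass at most ε under X (ε < 1), the conditional mean satisfies ‖E[X | E^c] - μ‖₂ ≤ σ·√(ε/(1-ε)). In particular, removing an ε-fraction of the mass of a bounded-covariance distribution shifts the mean by at most O(σ√ε). -/

import Mathlib

open MeasureTheory
open scoped RealInnerProductSpace

lemma cs_helper {Ω : Type*} [MeasurableSpace Ω] (ν : Measure Ω) [IsFiniteMeasure ν]
    {Y : Ω → ℝ} (hY : Integrable Y ν) (hY2 : Integrable (fun ω => Y ω ^ 2) ν) :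
    (∫ ω, Y ω ∂ν) ^ 2 ≤ (ν Set.univ).toReal * ∫ ω, Y ω ^ 2 ∂ν := by
  set M := (ν Set.univ).toReal with hM
  set I := ∫ ω, Y ω ∂ν with hI
  set J := ∫ ω, Y ω ^ 2 ∂ν with hJ
  have key : ∀ t : ℝ, 0 ≤ M * (t * t) + (-(2 * I)) * t + J := by
    intro t
    have h0 : 0 ≤ ∫ ω, (Y ω - t) ^ 2 ∂ν := integral_nonneg fun ω => sq_nonneg _
    have hexp : ∫ ω, (Y ω - t) ^ 2 ∂ν = M * (t * t) + (-(2 * t)) * I + J := by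
      have e : ∀ ω, (Y ω - t) ^ 2 = Y ω ^ 2 - (2 * t) * Y ω + t ^ 2 := fun ω => by ring
      simp_rw [e]
      have i1 : Integrable (fun ω => Y ω ^ 2 - 2 * t * Y ω) ν := hY2.sub (hY.const_mul (2*t))
      rw [integral_add i1 (integrable_const _),
        integral_sub hY2 (hY.const_mul (2*t)), integral_const_mul, integral_const,
        smul_eq_mul, Measure.real]
      ring
    rw [hexp] at h0
    nlinarith [h0]
  have hd := discrim_le_zero key
  rw [discrim] at hd
  nlinarith [hd]

/-- Removing an event of probability at most `ε` from a distribution with covariance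
`⪯ σ²I` shifts the mean by at most `σ·√(ε/(1-ε))`. -/
theorem stmt4 (d : ℕ) (Ω : Type*) [MeasurableSpace Ω] (ℙ : Measure Ω)
    [IsProbabilityMeasure ℙ] (X : Ω → EuclideanSpace ℝ (Fin d))
    (hXmeas : AEMeasurable X ℙ) (hXint : Integrable X ℙ)
    (μ : EuclideanSpace ℝ (Fin d)) (hμ : ∫ ω, X ω ∂ℙ = μ)
    (σ ε : ℝ) (hσ : 0 ≤ σ) (hε0 : 0 ≤ ε) (hε1 : ε < 1)
    (hsq : ∀ v : EuclideanSpace ℝ (Fin d), Integrable (fun ω => ⟪v, X ω - μ⟫ ^ 2) ℙ)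
    (hcov : ∀ v : EuclideanSpace ℝ (Fin d), ‖v‖ = 1 →
      ∫ ω, ⟪v, X ω - μ⟫ ^ 2 ∂ℙ ≤ σ ^ 2)
    (E : Set Ω) (hE : MeasurableSet E) (hEε : ℙ E ≤ ENNReal.ofReal ε) :
    ‖(ℙ Eᶜ).toReal⁻¹ • (∫ ω in Eᶜ, X ω ∂ℙ) - μ‖ ≤ σ * Real.sqrt (ε / (1 - ε)) := by
  have hε1' : (0:ℝ) < 1 - ε := by linarith
  have hRHS : 0 ≤ σ * Real.sqrt (ε / (1 - ε)) :=
    mul_nonneg hσ (Real.sqrt_nonneg _)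
  -- basic measure facts
  set p := (ℙ E).toReal with hp
  set q := (ℙ Eᶜ).toReal with hq
  have hEtop : ℙ E ≠ ⊤ := measure_ne_top _ _
  have hpq : p + q = 1 := by
    rw [hp, hq, ← ENNReal.toReal_add hEtop (measure_ne_top _ _),
      measure_add_measure_compl hE]
    simp
  have hp0 : 0 ≤ p := ENNReal.toReal_nonneg
  have hpε : p ≤ ε := by
    rw [hp]
    calc (ℙ E).toReal ≤ (ENNReal.ofReal ε).toReal := ENNReal.toReal_mono (by simp) hEε
    _ = ε := ENNReal.toReal_ofReal hε0
  have hqpos : 0 < q := by linarith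
  have hq1ε : 1 - ε ≤ q := by linarith
  -- trivial case: shift is zero
  set w := (ℙ Eᶜ).toReal⁻¹ • (∫ ω in Eᶜ, X ω ∂ℙ) - μ with hw
  by_cases hw0 : w = 0
  · rw [hw0]; simpa using hRHS
  -- unit vector
  set v := ‖w‖⁻¹ • w with hv
  have hv1 : ‖v‖ = 1 := norm_smul_inv_norm hw0
  set Y : Ω → ℝ := fun ω => ⟪v, X ω - μ⟫ with hY
  have hXμint : Integrable (fun ω => X ω - μ) ℙ := hXint.sub (integrable_const μ)
  have hYint : Integrable Y ℙ := hXμint.const_inner v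
  have hY2int : Integrable (fun ω => Y ω ^ 2) ℙ := hsq v
  -- mean of Y is zero
  have hYmean : ∫ ω, Y ω ∂ℙ = 0 := by
    rw [hY]
    rw [integral_inner hXμint v]
    rw [integral_sub hXint (integrable_const _), hμ, integral_const]
    simp
  set a := ∫ ω in E, Y ω ∂ℙ with ha
  set b := ∫ ω in Eᶜ, Y ω ∂ℙ with hb
  have hab : a + b = 0 := by
    rw [ha, hb, integral_add_compl hE hYint, hYmean]
  -- second moments
  set Je := ∫ ω in E, Y ω ^ 2 ∂ℙ with hJe
  set Jc := ∫ ω in Eᶜ, Y ω ^ 2 ∂ℙ with hJc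
  have hJsum : Je + Jc ≤ σ ^ 2 := by
    rw [hJe, hJc, integral_add_compl hE hY2int]
    exact hcov v hv1
  have hJe0 : 0 ≤ Je := integral_nonneg fun ω => sq_nonneg _
  have hJc0 : 0 ≤ Jc := integral_nonneg fun ω => sq_nonneg _
  -- Cauchy-Schwarz
  have hCSE : a ^ 2 ≤ p * Je := by
    have := cs_helper (ℙ.restrict E) hYint.restrict hY2int.restrict
    rwa [Measure.restrict_apply_univ] at this
  have hCSC : b ^ 2 ≤ q * Jc := by
    have := cs_helper (ℙ.restrict Eᶜ) hYint.restrict hY2int.restrict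
    rwa [Measure.restrict_apply_univ] at this
  -- the shift equals q⁻¹ * b
  have hshift : ‖w‖ = q⁻¹ * b := by
    have h1 : ⟪v, w⟫ = ‖w‖ := by
      rw [hv, real_inner_smul_left, real_inner_self_eq_norm_sq]
      field_simp [norm_ne_zero_iff.mpr hw0]
    have h2 : b = ⟪v, (∫ ω in Eᶜ, X ω ∂ℙ)⟫ - q * ⟪v, μ⟫ := by
      rw [hb, hY]
      have : ∫ ω in Eᶜ, ⟪v, X ω - μ⟫ ∂ℙ = ⟪v, ∫ ω in Eᶜ, (X ω - μ) ∂ℙ⟫ :=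
        integral_inner hXμint.restrict v
      rw [this, integral_sub hXint.restrict (integrable_const _), integral_const,
        Measure.real, Measure.restrict_apply_univ, inner_sub_right, real_inner_smul_right]
    have h3 : ⟪v, w⟫ = q⁻¹ * ⟪v, (∫ ω in Eᶜ, X ω ∂ℙ)⟫ - ⟪v, μ⟫ := by
      rw [hw, inner_sub_right, real_inner_smul_right, hq]
    rw [← h1, h3, h2]
    field_simp
  -- combine
  have hb2 : b ^ 2 ≤ p * q * σ ^ 2 := by
    have ha2 : b ^ 2 ≤ p * Je := by
      have : a = -b := by linarith
      rw [this] at hCSE; simpa using hCSE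
    nlinarith [mul_nonneg hp0 hqpos.le]
  have hnormsq : ‖w‖ ^ 2 ≤ σ ^ 2 * (ε / (1 - ε)) := by
    have hdiv : p / q ≤ ε / (1 - ε) := div_le_div₀ hε0 hpε hε1' hq1ε
    have h4 : ‖w‖ ^ 2 = b ^ 2 / q ^ 2 := by
      rw [hshift]; field_simp
    rw [h4]
    calc b ^ 2 / q ^ 2 ≤ p * q * σ ^ 2 / q ^ 2 := by gcongr
      _ = σ ^ 2 * (p / q) := by field_simp [hqpos.ne']
      _ ≤ σ ^ 2 * (ε / (1 - ε)) := mul_le_mul_of_nonneg_left hdiv (sq_nonneg σ)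
  calc ‖w‖ = Real.sqrt (‖w‖ ^ 2) := (Real.sqrt_sq (norm_nonneg _)).symm
    _ ≤ Real.sqrt (σ ^ 2 * (ε / (1 - ε))) := Real.sqrt_le_sqrt hnormsq
    _ = σ * Real.sqrt (ε / (1 - ε)) := by
        rw [Real.sqrt_mul (sq_nonneg σ), Real.sqrt_sq hσ]
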